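/- Let n = (n_x, n_y, n_z) ∈ ℝ³ be nonzero and set r = √(n_x² + n_y² + n_z²), ν = n_x + i·n_y, μ = n_x² + n_y², c = cos(r), s = sin(r), c' = cos(r/2), s' = sin(r/2). Then the matrix exponential of i·(n_x J_x + n_y J_y + n_z J_z) for the spin-1 matrices equals (1/(4r²)) times the 3×3 matrix with rows: [2(c+1)μ + 4c·n_z² + 4i·r·s·n_z, 4i·√2·conj(ν)·s'·(r·c' + i·n_z·s'), 2(c−1)·conj(ν)²]; [2√2·ν·((c−1)·n_z + i·r·s), 4(c·μ + n_z²), 2√2·conj(ν)·(−(c−1)·n_z + i·r·s)]; [2(c−1)·ν², 2√2·ν·(−(c−1)·n_z + i·r·s), 2(c+1)μ + 4c·n_z² − 4i·r·s·n_z]. -/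

import Mathlib

set_option maxHeartbeats 2000000

section Aux

variable (A : Matrix (Fin 3) (Fin 3) ℂ)

lemma aux_pow_odd (R : ℂ) (hA : A ^ 3 = (-(R ^ 2)) • A) (k : ℕ) :
    A ^ (2 * k + 1) = ((-1 : ℂ) ^ k * R ^ (2 * k)) • A := by
  induction k with
  | zero => simp
  | succ n ih =>
    rw [show 2 * (n + 1) + 1 = (2 * n + 1) + 2 by ring, pow_add, ih, Matrix.smul_mul,
      show A * A ^ 2 = A ^ 3 from (pow_succ' A 2).symm, hA, smul_smul]
    congr 1
    ring

lemma aux_pow_even (R : ℂ) (hA : A ^ 3 = (-(R ^ 2)) • A) (k : ℕ) :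
    A ^ (2 * k + 2) = ((-1 : ℂ) ^ k * R ^ (2 * k)) • A ^ 2 := by
  rw [show 2 * k + 2 = (2 * k + 1) + 1 by ring, pow_succ, aux_pow_odd A R hA k,
    Matrix.smul_mul, ← sq]

set_option maxHeartbeats 1000000 in
lemma exp_of_cube (r : ℝ) (hr : r ≠ 0)
    (hA : A ^ 3 = (-((r : ℂ) ^ 2)) • A) :
    NormedSpace.exp A = 1 + ((Real.sin r / r : ℝ) : ℂ) • A +
      (((1 - Real.cos r) / r ^ 2 : ℝ) : ℂ) • A ^ 2 := by
  letI : SeminormedRing (Matrix (Fin 3) (Fin 3) ℂ) := Matrix.linftyOpSemiNormedRing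
  letI : NormedRing (Matrix (Fin 3) (Fin 3) ℂ) := Matrix.linftyOpNormedRing
  letI : NormedAlgebra ℂ (Matrix (Fin 3) (Fin 3) ℂ) := Matrix.linftyOpNormedAlgebra
  rw [NormedSpace.exp_eq_tsum ℂ]
  refine HasSum.tsum_eq ?_
  have hrC : ((r : ℂ)) ≠ 0 := Complex.ofReal_ne_zero.mpr hr
  set N : Matrix (Fin 3) (Fin 3) ℂ := (-(1 / (r : ℂ) ^ 2)) • A ^ 2 with hN
  -- odd part
  have hodd : HasSum (fun k => ((((2 * k + 1).factorial : ℂ))⁻¹) • A ^ (2 * k + 1))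
      (((Real.sin r / r : ℝ) : ℂ) • A) := by
    have h2 := (Complex.ofRealCLM.hasSum ((Real.hasSum_sin r).div_const r)).smul_const A
    simp only [Complex.ofRealCLM_apply] at h2
    convert h2 using 2 with k
    rw [aux_pow_odd A _ hA k, smul_smul]
    congr 1
    have : ((2 * k + 1).factorial : ℂ) ≠ 0 := Nat.cast_ne_zero.mpr (Nat.factorial_ne_zero _)
    push_cast
    field_simp
    ring
  -- even part
  have heven : HasSum (fun k => ((((2 * k).factorial : ℂ))⁻¹) • A ^ (2 * k))
      (((Real.cos r : ℝ) : ℂ) • N + (1 - N)) := by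
    have h1 := (Complex.ofRealCLM.hasSum (Real.hasSum_cos r)).smul_const N
    have h2 := h1.add (hasSum_ite_eq 0 ((1 : Matrix (Fin 3) (Fin 3) ℂ) - N))
    simp only [Complex.ofRealCLM_apply] at h2
    convert h2 using 2 with k
    rcases k with _ | k
    · simp
    · rw [show 2 * (k + 1) = 2 * k + 2 by ring, aux_pow_even A _ hA k, smul_smul,
        if_neg (Nat.succ_ne_zero k), add_zero, hN, smul_smul]
      congr 1
      have hf : (((2 * k + 2).factorial : ℂ)) ≠ 0 := Nat.cast_ne_zero.mpr (Nat.factorial_ne_zero _)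
      push_cast
      field_simp
      ring
  have h := HasSum.even_add_odd (f := fun n => ((n.factorial : ℂ))⁻¹ • A ^ n) heven hodd
  convert h using 1
  case e'_3 => rfl
  rw [hN, smul_smul]
  push_cast
  module

end Aux



open Matrix

/-- Exponential parametrization of the spin-1 rotation matrix:
`exp(i(n_x J_x + n_y J_y + n_z J_z))` equals `1/(4r²)` times the explicit 3×3 matrix
below, with `r = √(n_x²+n_y²+n_z²)`, `ν = n_x + i n_y`, `μ = n_x² + n_y²`,
`c = cos r`, `s = sin r`, `c' = cos(r/2)`, `s' = sin(r/2)`. -/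
theorem exp_spin_one (nx ny nz : ℝ) (h : (nx, ny, nz) ≠ 0) :
    let Jx : Matrix (Fin 3) (Fin 3) ℂ :=
      ((1 / Real.sqrt 2 : ℝ) : ℂ) • !![0, 1, 0; 1, 0, 1; 0, 1, 0]
    let Jy : Matrix (Fin 3) (Fin 3) ℂ :=
      ((1 / Real.sqrt 2 : ℝ) : ℂ) •
        !![0, -Complex.I, 0; Complex.I, 0, -Complex.I; 0, Complex.I, 0]
    let Jz : Matrix (Fin 3) (Fin 3) ℂ := !![1, 0, 0; 0, 0, 0; 0, 0, -1]
    let r : ℝ := Real.sqrt (nx ^ 2 + ny ^ 2 + nz ^ 2)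
    let ν : ℂ := (nx : ℂ) + Complex.I * (ny : ℂ)
    let μ : ℂ := ((nx ^ 2 + ny ^ 2 : ℝ) : ℂ)
    let c : ℂ := (Real.cos r : ℂ)
    let s : ℂ := (Real.sin r : ℂ)
    let c' : ℂ := (Real.cos (r / 2) : ℂ)
    let s' : ℂ := (Real.sin (r / 2) : ℂ)
    NormedSpace.exp (Complex.I • ((nx : ℂ) • Jx + (ny : ℂ) • Jy + (nz : ℂ) • Jz)) =
      (1 / (4 * (r : ℂ) ^ 2)) •
        !![2 * (c + 1) * μ + 4 * c * (nz : ℂ) ^ 2 + 4 * Complex.I * (r : ℂ) * s * (nz : ℂ),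
            4 * Complex.I * (Real.sqrt 2 : ℂ) * starRingEnd ℂ ν * s' *
              ((r : ℂ) * c' + Complex.I * (nz : ℂ) * s'),
            2 * (c - 1) * (starRingEnd ℂ ν) ^ 2;
          2 * (Real.sqrt 2 : ℂ) * ν * ((c - 1) * (nz : ℂ) + Complex.I * (r : ℂ) * s),
            4 * (c * μ + (nz : ℂ) ^ 2),
            2 * (Real.sqrt 2 : ℂ) * starRingEnd ℂ ν *
              (-((c - 1) * (nz : ℂ)) + Complex.I * (r : ℂ) * s);
          2 * (c - 1) * ν ^ 2,
            2 * (Real.sqrt 2 : ℂ) * ν * (-((c - 1) * (nz : ℂ)) + Complex.I * (r : ℂ) * s),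
            2 * (c + 1) * μ + 4 * c * (nz : ℂ) ^ 2 - 4 * Complex.I * (r : ℂ) * s * (nz : ℂ)] := by
  intro Jx Jy Jz r ν μ c s c' s'
  have hsum : 0 < nx ^ 2 + ny ^ 2 + nz ^ 2 := by
    by_contra hle
    push_neg at hle
    have hx : nx = 0 := by nlinarith [sq_nonneg nx, sq_nonneg ny, sq_nonneg nz]
    have hy : ny = 0 := by nlinarith [sq_nonneg nx, sq_nonneg ny, sq_nonneg nz]
    have hz : nz = 0 := by nlinarith [sq_nonneg nx, sq_nonneg ny, sq_nonneg nz]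
    exact h (by simp [Prod.ext_iff, hx, hy, hz])
  have hr0 : r ≠ 0 := by
    simp only [r]
    positivity
  set sq2 : ℂ := ((Real.sqrt 2 : ℝ) : ℂ) with hsq2def
  have hsq2 : sq2 ≠ 0 := by
    simp only [hsq2def]
    exact_mod_cast Real.sqrt_ne_zero'.mpr (by norm_num)
  have h2 : sq2 ^ 2 = 2 := by
    rw [hsq2def]
    exact_mod_cast congrArg Complex.ofReal (Real.sq_sqrt (by norm_num : (0:ℝ) ≤ 2))
  have hAM : Complex.I • ((nx : ℂ) • Jx + (ny : ℂ) • Jy + (nz : ℂ) • Jz) =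
      !![Complex.I * nz, (Complex.I * nx + ny) / sq2, 0;
         (Complex.I * nx - ny) / sq2, 0, (Complex.I * nx + ny) / sq2;
         0, (Complex.I * nx - ny) / sq2, -(Complex.I * nz)] := by
    ext i j
    fin_cases i <;> fin_cases j <;>
      simp [Jx, Jy, Jz, hsq2def, div_eq_mul_inv] <;>
      first
        | linear_combination (-(((Real.sqrt 2:ℝ):ℂ))⁻¹ * (ny:ℂ)) * Complex.I_sq
        | linear_combination ((((Real.sqrt 2:ℝ):ℂ))⁻¹ * (ny:ℂ)) * Complex.I_sq
  have hr2 : r ^ 2 = nx ^ 2 + ny ^ 2 + nz ^ 2 := Real.sq_sqrt hsum.le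
  have hrC : (r : ℂ) ^ 2 = (nx : ℂ) ^ 2 + (ny : ℂ) ^ 2 + (nz : ℂ) ^ 2 := by
    exact_mod_cast congrArg Complex.ofReal hr2
  set M : Matrix (Fin 3) (Fin 3) ℂ :=
    !![Complex.I * nz, (Complex.I * nx + ny) / sq2, 0;
       (Complex.I * nx - ny) / sq2, 0, (Complex.I * nx + ny) / sq2;
       0, (Complex.I * nx - ny) / sq2, -(Complex.I * nz)] with hMdef
  have hI2 : Complex.I ^ 2 = -1 := Complex.I_sq
  have hI3 : Complex.I ^ 3 = -Complex.I := by rw [pow_succ, hI2]; ring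
  have hI4 : Complex.I ^ 4 = 1 := by rw [show (4:ℕ) = 2*2 from rfl, pow_mul, hI2]; norm_num
  have h23 : sq2 ^ 3 = 2 * sq2 := by rw [pow_succ, h2]
  have h24 : sq2 ^ 4 = 4 := by rw [pow_succ, h23]; rw [mul_assoc, ← pow_two, h2]; norm_num
  have hA3 : M ^ 3 = (-((r:ℂ)^2)) • M := by
    rw [hrC, pow_succ, pow_two, hMdef]
    ext i j
    fin_cases i <;> fin_cases j <;>
      simp [Matrix.mul_apply, Fin.sum_univ_three]
    all_goals try field_simp
    all_goals try ring_nf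
    all_goals try simp only [hI2, hI3, hI4, h2, h23, h24]
    all_goals try ring_nf
    all_goals try simp only [hI2, hI3, hI4, h2, h23, h24]
    all_goals try ring_nf

  have hsin' : (Real.sin r : ℂ) = 2 * ((Real.sin (r/2) : ℝ) : ℂ) * ((Real.cos (r/2) : ℝ) : ℂ) := by
    have h' := Real.sin_two_mul (r/2)
    rw [show 2*(r/2) = r by ring] at h'
    exact_mod_cast congrArg Complex.ofReal h'
  have hcos' : (Real.cos r : ℂ) = 1 - 2 * ((Real.sin (r/2) : ℝ) : ℂ) ^ 2 := by
    have h' := Real.cos_two_mul' (x := r/2)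
    rw [show 2*(r/2) = r by ring] at h'
    have hpy := Real.sin_sq_add_cos_sq (r/2)
    have : Real.cos r = 1 - 2 * Real.sin (r/2) ^ 2 := by rw [h']; linarith
    exact_mod_cast congrArg Complex.ofReal this
  have hr3 : (r:ℂ) ^ 3 = ((nx:ℂ)^2 + (ny:ℂ)^2 + (nz:ℂ)^2) * (r:ℂ) := by
    rw [show (3:ℕ) = 2+1 from rfl, pow_add, hrC]; ring
  have hr4 : (r:ℂ) ^ 4 = ((nx:ℂ)^2 + (ny:ℂ)^2 + (nz:ℂ)^2) ^ 2 := by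
    rw [show (4:ℕ) = 2*2 from rfl, pow_mul, hrC]
  have hr5 : (r:ℂ) ^ 5 = ((nx:ℂ)^2 + (ny:ℂ)^2 + (nz:ℂ)^2) ^ 2 * (r:ℂ) := by
    rw [show (5:ℕ) = 2*2+1 from rfl, pow_add, pow_mul, hrC, pow_one]
  have hrC0 : (r:ℂ) ≠ 0 := Complex.ofReal_ne_zero.mpr hr0
  have hexp := exp_of_cube M r hr0 hA3
  rw [pow_two M] at hexp
  rw [hAM, hexp]
  simp only [ν, μ, c, s, c', s', Complex.ofReal_div, Complex.ofReal_sub, Complex.ofReal_one,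
    Complex.ofReal_pow, Complex.ofReal_add, hsin', hcos']
  ext i j
  fin_cases i <;> fin_cases j <;>
    simp [Matrix.mul_apply, Fin.sum_univ_three, Matrix.one_apply, hMdef]
  all_goals try field_simp [hrC0, hsq2]
  all_goals try ring_nf
  all_goals try simp only [hI2, hI3, hI4, h2, h23, h24, hrC, hr3, hr4, hr5]
  all_goals try ring_nf
  all_goals try simp only [hI2, hI3, hI4, h2, h23, h24, hrC, hr3, hr4, hr5]
  all_goals try ring_nf
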